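/- For every temporal graph 𝒢 with lifetime T in which every snapshot has at least one edge, every tuning parameter ω ≥ 0, and every partition 𝒜 of 𝒢, the temporal modularity satisfies −1/2 ≤ q_ω(𝒢,𝒜) ≤ 1. -/
import Mathlib


open Finset
open scoped Classical

namespace TemporalModularity

noncomputable section

variable {V : Type*} [Fintype V] {P : Type*}

/-- Twice the number of edges of `G` with both endpoints in `A`
(the sum over ordered pairs of vertices of `A` of the adjacency indicator). -/
def twoE (G : SimpleGraph V) (A : Finset V) : ℝ :=
  ∑ u ∈ A, ∑ v ∈ A, if G.Adj u v then (1 : ℝ) else 0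

/-- The degree of `v` in `G`, as a real number. -/
def deg (G : SimpleGraph V) (v : V) : ℝ :=
  ∑ u : V, if G.Adj v u then (1 : ℝ) else 0

/-- The number of edges of `G` (half the sum of the degrees), as a real number. -/
def numEdges (G : SimpleGraph V) : ℝ := (∑ v : V, deg G v) / 2

/-- The volume of `A` in `G`: the sum of the degrees of the vertices of `A`. -/
def vol (G : SimpleGraph V) (A : Finset V) : ℝ := ∑ v ∈ A, deg G v

/-- The part with label `p` of the vertex partition induced by the labelling `π`. -/
def part (π : V → P) (p : P) : Finset V := univ.filter fun v => π v = p

/-- `Σ_{A ∈ 𝒜} (2 e_G(A) − vol_G(A)² / (2m))`, where `𝒜` is the partition of the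
vertices induced by the labelling `π` (empty parts contribute zero). -/
def snapTerm (G : SimpleGraph V) (π : V → P) : ℝ :=
  ∑ p ∈ univ.image π,
    (twoE G (part π p) - vol G (part π p) ^ 2 / (2 * numEdges G))

/-- The static modularity `q(G,𝒜) = Σ_{A ∈ 𝒜} (e(A)/m − vol(A)²/(4m²))` of the
partition induced by the labelling `π`. -/
def staticQ (G : SimpleGraph V) (π : V → P) : ℝ :=
  ∑ p ∈ univ.image π,
    (twoE G (part π p) / (2 * numEdges G) -
      vol G (part π p) ^ 2 / (4 * numEdges G ^ 2))

/-- The maximum static modularity `q*(G)` over all vertex partitions (every partition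
of `V` is induced by some labelling `V → V`). -/
def staticQStar (G : SimpleGraph V) : ℝ := ⨆ π : V → V, staticQ G π

/-- The loyalty contribution `L(𝒜)` of the temporal partition `π` with lifetime `T`. -/
def loyalty (T : ℕ) (π : V → ℕ → P) : ℝ :=
  ∑ v : V, ∑ t ∈ Icc 1 (T - 1), if π v t = π v (t + 1) then (1 : ℝ) else 0

/-- The per-time loyalty `L(𝒜,t)` of the temporal partition `π`. -/
def loyaltyAt (π : V → ℕ → P) (t : ℕ) : ℝ :=
  ∑ v : V, if π v t = π v (t + 1) then (1 : ℝ) else 0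

/-- The normalisation factor `μ_ω(𝒢) = ω n (T−1)/2 + Σ_t m_t`. -/
def mu (G : ℕ → SimpleGraph V) (T : ℕ) (ω : ℝ) : ℝ :=
  ω * (Fintype.card V) * ((T : ℝ) - 1) / 2 + ∑ t ∈ Icc 1 T, numEdges (G t)

/-- The non-normalised temporal modularity of the restriction of the temporal graph
`G` to the time interval `[a,b]`, for the partition `π`. -/
def qTildeI (G : ℕ → SimpleGraph V) (a b : ℕ) (ω : ℝ) (π : V → ℕ → P) : ℝ :=
  (∑ t ∈ Icc a b, snapTerm (G t) fun v => π v t) +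
    ω * ∑ v : V, ∑ t ∈ Icc a (b - 1), if π v t = π v (t + 1) then (1 : ℝ) else 0

/-- The non-normalised temporal modularity `q̃_ω(𝒢,𝒜)` of the partition `π` of the
temporal graph `G` with lifetime `T`. -/
def qTilde (G : ℕ → SimpleGraph V) (T : ℕ) (ω : ℝ) (π : V → ℕ → P) : ℝ :=
  qTildeI G 1 T ω π

/-- The temporal modularity `q_ω(𝒢,𝒜)` of the partition `π` of the temporal graph `G`
with lifetime `T`. -/
def qTemp (G : ℕ → SimpleGraph V) (T : ℕ) (ω : ℝ) (π : V → ℕ → P) : ℝ :=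
  qTilde G T ω π / (2 * mu G T ω)

/-- The temporal modularity `q*_ω(𝒢)`: the maximum of `q_ω(𝒢,𝒜)` over all partitions
(every partition of `V × [T]` is induced by some labelling into `ℕ`). -/
def qTempStar (G : ℕ → SimpleGraph V) (T : ℕ) (ω : ℝ) : ℝ :=
  ⨆ π : V → ℕ → ℕ, qTemp G T ω π

/-- The temporal `k`-modularity `q*_{k,ω}(𝒢)`: the maximum of `q_ω(𝒢,𝒜)` over all
partitions into at most `k` parts. -/
def qTempStarK (G : ℕ → SimpleGraph V) (T : ℕ) (ω : ℝ) (k : ℕ) : ℝ :=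
  ⨆ π : V → ℕ → Fin k, qTemp G T ω π

/-- The maximum non-normalised temporal modularity of the restriction of `G` to the
time interval `[a,b]`, over all partitions. -/
def qTildeStarI (G : ℕ → SimpleGraph V) (a b : ℕ) (ω : ℝ) : ℝ :=
  ⨆ π : V → ℕ → ℕ, qTildeI G a b ω π

/-- The non-normalised temporal modularity `q̃*_ω(𝒢)` of the temporal graph `G` with
lifetime `T`. -/
def qTildeStar (G : ℕ → SimpleGraph V) (T : ℕ) (ω : ℝ) : ℝ := qTildeStarI G 1 T ω

/-- The maximum non-normalised temporal modularity of the restriction of `G` to `[a,b]`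
over partitions into at most `c` parts. -/
def qTildeStarKI (G : ℕ → SimpleGraph V) (a b : ℕ) (ω : ℝ) (c : ℕ) : ℝ :=
  ⨆ π : V → ℕ → Fin c, qTildeI G a b ω π

/-- The non-normalised temporal `c`-modularity `q̃*_{c,ω}(𝒢)`. -/
def qTildeStarK (G : ℕ → SimpleGraph V) (T : ℕ) (ω : ℝ) (c : ℕ) : ℝ :=
  qTildeStarKI G 1 T ω c

end

section Aux

variable {V : Type*} [Fintype V] {P : Type*}

private lemma ind_nonneg (c : Prop) [Decidable c] : (0:ℝ) ≤ if c then 1 else 0 := by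
  split <;> norm_num

private lemma deg_nonneg' (G : SimpleGraph V) (v : V) : 0 ≤ deg G v :=
  Finset.sum_nonneg fun _ _ => ind_nonneg _

private lemma twoE_nonneg' (G : SimpleGraph V) (A : Finset V) : 0 ≤ twoE G A :=
  Finset.sum_nonneg fun _ _ => Finset.sum_nonneg fun _ _ => ind_nonneg _

private lemma vol_nonneg' (G : SimpleGraph V) (A : Finset V) : 0 ≤ vol G A :=
  Finset.sum_nonneg fun _ _ => deg_nonneg' G _

private lemma sum_deg_eq (G : SimpleGraph V) : ∑ v : V, deg G v = 2 * numEdges G := by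
  unfold numEdges; ring

private lemma inner_le_deg (G : SimpleGraph V) (A : Finset V) (u : V) :
    ∑ v ∈ A, (if G.Adj u v then (1:ℝ) else 0) ≤ deg G u :=
  Finset.sum_le_sum_of_subset_of_nonneg (Finset.subset_univ A)
    (fun _ _ _ => ind_nonneg _)

private lemma numEdges_pos' (G : SimpleGraph V) (h : G.edgeSet.Nonempty) :
    0 < numEdges G := by
  obtain ⟨e, he⟩ := h
  induction e using Sym2.ind with
  | _ u v =>
    rw [SimpleGraph.mem_edgeSet] at he
    have h1 : (1:ℝ) ≤ deg G u := by
      unfold deg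
      simpa [he] using Finset.single_le_sum
        (f := fun w => if G.Adj u w then (1:ℝ) else 0)
        (fun i _ => ind_nonneg _) (Finset.mem_univ v)
    have h2 : deg G u ≤ ∑ w : V, deg G w :=
      Finset.single_le_sum (fun i _ => deg_nonneg' G i) (Finset.mem_univ u)
    unfold numEdges; linarith

private lemma vol_sum_parts (G : SimpleGraph V) (π : V → P) :
    ∑ p ∈ univ.image π, vol G (part π p) = 2 * numEdges G := by
  rw [← sum_deg_eq]
  exact Finset.sum_fiberwise_of_maps_to
    (fun x _ => Finset.mem_image_of_mem π (Finset.mem_univ x)) _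

private lemma twoE_sum_parts_le (G : SimpleGraph V) (π : V → P) :
    ∑ p ∈ univ.image π, twoE G (part π p) ≤ 2 * numEdges G := by
  have h1 : ∑ u : V, ∑ v ∈ part π (π u), (if G.Adj u v then (1:ℝ) else 0)
      = ∑ p ∈ univ.image π, twoE G (part π p) := by
    rw [← Finset.sum_fiberwise_of_maps_to (g := π)
      (fun x _ => Finset.mem_image_of_mem π (Finset.mem_univ x))
      (fun u => ∑ v ∈ part π (π u), (if G.Adj u v then (1:ℝ) else 0))]
    refine Finset.sum_congr rfl fun p _ => ?_
    refine Finset.sum_congr rfl fun u hu => ?_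
    rw [(Finset.mem_filter.mp hu).2]
  rw [← h1, ← sum_deg_eq]
  exact Finset.sum_le_sum fun u _ => inner_le_deg G _ u

private lemma cross_bound (G : SimpleGraph V) (A : Finset V) :
    2 * vol G A ≤ twoE G A + 2 * numEdges G := by
  have hsplit : vol G A
      = twoE G A + ∑ u ∈ A, ∑ v ∈ Aᶜ, (if G.Adj u v then (1:ℝ) else 0) := by
    unfold vol twoE deg
    rw [← Finset.sum_add_distrib]
    refine Finset.sum_congr rfl fun u _ => ?_
    exact (Finset.sum_add_sum_compl A _).symm
  have hcross : ∑ u ∈ A, ∑ v ∈ Aᶜ, (if G.Adj u v then (1:ℝ) else 0)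
      ≤ 2 * numEdges G - vol G A := by
    rw [Finset.sum_comm]
    have step : ∀ v ∈ Aᶜ, ∑ u ∈ A, (if G.Adj u v then (1:ℝ) else 0) ≤ deg G v := by
      intro v _
      calc ∑ u ∈ A, (if G.Adj u v then (1:ℝ) else 0)
          = ∑ u ∈ A, (if G.Adj v u then (1:ℝ) else 0) := by
            refine Finset.sum_congr rfl fun u _ => ?_
            rw [SimpleGraph.adj_comm]
        _ ≤ deg G v := inner_le_deg G A v
    calc ∑ v ∈ Aᶜ, ∑ u ∈ A, (if G.Adj u v then (1:ℝ) else 0)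
        ≤ ∑ v ∈ Aᶜ, deg G v := Finset.sum_le_sum step
      _ = 2 * numEdges G - vol G A := by
          have := Finset.sum_add_sum_compl A (deg G)
          unfold vol
          rw [← sum_deg_eq]
          linarith
  linarith

private lemma snapTerm_bounds (G : SimpleGraph V) (π : V → P) (hm : 0 < numEdges G) :
    -(numEdges G) ≤ snapTerm G π ∧ snapTerm G π ≤ 2 * numEdges G := by
  set m := numEdges G with hmdef
  set S := ∑ p ∈ univ.image π, twoE G (part π p) with hS
  set Q := ∑ p ∈ univ.image π, vol G (part π p) ^ 2 with hQ
  have hsnap : snapTerm G π = S - Q / (2 * m) := by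
    unfold snapTerm
    rw [Finset.sum_sub_distrib, hS, hQ, Finset.sum_div]
  have hSle : S ≤ 2 * m := twoE_sum_parts_le G π
  have hS0 : 0 ≤ S := Finset.sum_nonneg fun p _ => twoE_nonneg' G _
  have hvol : ∑ p ∈ univ.image π, vol G (part π p) = 2 * m := vol_sum_parts G π
  have h2m : 0 < 2 * m := by linarith
  have hQle : Q ≤ m * S + 2 * m ^ 2 := by
    have hper : ∀ p ∈ univ.image π,
        vol G (part π p) ^ 2 ≤ m * twoE G (part π p) + m * vol G (part π p) := by
      intro p hp
      have h1 := cross_bound G (part π p)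
      have h2 : vol G (part π p) ≤ 2 * m := by
        rw [← hvol]
        exact Finset.single_le_sum (fun q _ => vol_nonneg' G _) hp
      have h0 : 0 ≤ vol G (part π p) := vol_nonneg' G _
      have h3 : 0 ≤ twoE G (part π p) := twoE_nonneg' G _
      nlinarith
    calc Q ≤ ∑ p ∈ univ.image π,
          (m * twoE G (part π p) + m * vol G (part π p)) :=
            Finset.sum_le_sum hper
      _ = m * S + m * (2 * m) := by
          rw [Finset.sum_add_distrib, ← Finset.mul_sum, ← Finset.mul_sum, hvol, hS]
      _ = m * S + 2 * m ^ 2 := by ring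
  constructor
  · rw [hsnap]
    have hq : Q / (2 * m) ≤ S / 2 + m := by
      rw [div_le_iff₀ h2m]; nlinarith
    linarith
  · rw [hsnap]
    have hq : 0 ≤ Q / (2 * m) :=
      div_nonneg (Finset.sum_nonneg fun p _ => sq_nonneg _) (le_of_lt h2m)
    linarith

end Aux


/-- For every temporal graph with lifetime `T` in which every snapshot
has at least one edge, every tuning parameter `ω ≥ 0`, and every partition `π`,
the temporal modularity satisfies `−1/2 ≤ q_ω(𝒢,𝒜) ≤ 1`. -/
theorem temporalModularity_bounds {V : Type*} [Fintype V] {P : Type*}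
    (T : ℕ) (hT : 1 ≤ T) (G : ℕ → SimpleGraph V)
    (hE : ∀ t ∈ Icc 1 T, (G t).edgeSet.Nonempty)
    (ω : ℝ) (hω : 0 ≤ ω) (π : V → ℕ → P) :
    -(1 / 2) ≤ qTemp G T ω π ∧ qTemp G T ω π ≤ 1 := by
  have hm : ∀ t ∈ Icc 1 T, 0 < numEdges (G t) := fun t ht => numEdges_pos' _ (hE t ht)
  set M := ∑ t ∈ Icc 1 T, numEdges (G t) with hM
  have hne : (Icc 1 T).Nonempty := Finset.nonempty_Icc.mpr hT
  have hM0 : 0 < M := Finset.sum_pos hm hne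
  set Ssum := ∑ t ∈ Icc 1 T, snapTerm (G t) (fun v => π v t) with hSsum
  have hsum_lo : -M ≤ Ssum := by
    have h := Finset.sum_le_sum fun t ht =>
      (snapTerm_bounds (G t) (fun v => π v t) (hm t ht)).1
    rw [Finset.sum_neg_distrib] at h
    simpa [hM, hSsum] using h
  have hsum_hi : Ssum ≤ 2 * M := by
    have h := Finset.sum_le_sum fun t ht =>
      (snapTerm_bounds (G t) (fun v => π v t) (hm t ht)).2
    rw [← Finset.mul_sum] at h
    simpa [hM, hSsum] using h
  set L := ∑ v : V, ∑ t ∈ Icc 1 (T - 1), if π v t = π v (t + 1) then (1:ℝ) else 0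
    with hL
  have hL0 : 0 ≤ L :=
    Finset.sum_nonneg fun _ _ => Finset.sum_nonneg fun _ _ => ind_nonneg _
  have hT1 : (1:ℝ) ≤ (T:ℝ) := by exact_mod_cast hT
  have hL1 : L ≤ (Fintype.card V) * ((T:ℝ) - 1) := by
    have hcard : (((Icc 1 (T - 1)).card : ℕ) : ℝ) = (T:ℝ) - 1 := by
      rw [Nat.card_Icc]
      have : T - 1 + 1 - 1 = T - 1 := by omega
      rw [this, Nat.cast_sub hT]
      norm_num
    calc L ≤ ∑ _v : V, ∑ _t ∈ Icc 1 (T - 1), (1:ℝ) :=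
        Finset.sum_le_sum fun v _ => Finset.sum_le_sum fun t _ => by
          split <;> norm_num
      _ = (Fintype.card V) * ((T:ℝ) - 1) := by
          simp [Finset.sum_const, ← hcard, mul_comm]
  have hq : qTemp G T ω π = (Ssum + ω * L) / (2 * mu G T ω) := by
    unfold qTemp qTilde qTildeI
    rw [hSsum, hL]
  have hmu : 2 * mu G T ω = ω * (Fintype.card V) * ((T:ℝ) - 1) + 2 * M := by
    unfold mu; rw [hM]; ring
  have hωterm : 0 ≤ ω * (Fintype.card V) * ((T:ℝ) - 1) := by
    have : (0:ℝ) ≤ (Fintype.card V : ℝ) := Nat.cast_nonneg _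
    have h1 : (0:ℝ) ≤ (T:ℝ) - 1 := by linarith
    positivity
  have hmu0 : 0 < 2 * mu G T ω := by rw [hmu]; linarith
  have hωL0 : 0 ≤ ω * L := mul_nonneg hω hL0
  have hωL1 : ω * L ≤ ω * ((Fintype.card V) * ((T:ℝ) - 1)) :=
    mul_le_mul_of_nonneg_left hL1 hω
  constructor
  · rw [hq, le_div_iff₀ hmu0]
    rw [hmu]; linarith
  · rw [hq, div_le_one hmu0, hmu]
    linarith

end TemporalModularity
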